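/- arXiv:1212.1531 — 4 statements merged into one kernel-verified Lean document; each statement's English description precedes it below -/
import Mathlib

section
/- Let C = {x ∈ ℝ⁶ : x ≥ 0 and x₁ + x₂ − 2x₃ + x₄ + x₅ − 2x₆ = 0}. If x ∈ C is admissible and moreover satisfies 2x₁ + 2x₂ − 4x₃ = 0 and −x₂ + x₃ − x₄ + x₆ = 0 (i.e. ν(λ)(x) = 0 and ν(μ)(x) = 0), then x = 0. (This is the paper's verification that the admissible part of the closed-surface solution cone Q₀(𝒯) for the figure-eight knot complement is trivial, whence any closed embedded normal surface in that complement is a union of vertex-linking tori.) -/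
/-- The cone `Q(𝒯)` for Thurston's two-tetrahedron ideal triangulation of the
figure-eight knot complement: nonnegative solutions of the `Q`-matching equation. -/
def QCone : Set (Fin 6 → ℝ) :=
  {x | (∀ i, 0 ≤ x i) ∧ x 0 + x 1 - 2 * x 2 + x 3 + x 4 - 2 * x 5 = 0}

/-- Admissibility: at most one quadrilateral coordinate is nonzero in each tetrahedron. -/
def Admissible (x : Fin 6 → ℝ) : Prop :=
  ((x 1 = 0 ∧ x 2 = 0) ∨ (x 0 = 0 ∧ x 2 = 0) ∨ (x 0 = 0 ∧ x 1 = 0)) ∧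
  ((x 4 = 0 ∧ x 5 = 0) ∨ (x 3 = 0 ∧ x 5 = 0) ∨ (x 3 = 0 ∧ x 4 = 0))

/-- Boundary functional associated to the standard longitude. -/
def nuLambda (x : Fin 6 → ℝ) : ℝ := 2 * x 0 + 2 * x 1 - 4 * x 2

/-- Boundary functional associated to the standard meridian. -/
def nuMu (x : Fin 6 → ℝ) : ℝ := -x 1 + x 2 - x 3 + x 5

theorem admissible_Q0_trivial (x : Fin 6 → ℝ) (hx : x ∈ QCone)
    (hadm : Admissible x) (hlam : nuLambda x = 0) (hmu : nuMu x = 0) :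
    x = 0 := by
  obtain ⟨hpos, heq⟩ := hx
  unfold Admissible at hadm
  unfold nuLambda at hlam
  unfold nuMu at hmu
  have h0 := hpos 0; have h1 := hpos 1; have h2 := hpos 2
  have h3 := hpos 3; have h4 := hpos 4; have h5 := hpos 5
  obtain ⟨⟨ha1, ha2⟩ | ⟨ha1, ha2⟩ | ⟨ha1, ha2⟩, ⟨hb1, hb2⟩ | ⟨hb1, hb2⟩ | ⟨hb1, hb2⟩⟩ := hadm <;>
    [skip; skip; skip; skip; skip; skip; skip; skip; skip] <;>
  · have e0 : x 0 = 0 := by linarith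
    have e1 : x 1 = 0 := by linarith
    have e2 : x 2 = 0 := by linarith
    have e3 : x 3 = 0 := by linarith
    have e4 : x 4 = 0 := by linarith
    have e5 : x 5 = 0 := by linarith
    funext i
    fin_cases i <;> assumption
end

section
/- Each of the four vectors v₁ = (2,0,0,0,0,1), v₂ = (0,2,0,0,0,1), v₃ = (0,0,1,2,0,0), v₄ = (0,0,1,0,2,0) belongs to C = {x ∈ ℝ⁶ : x ≥ 0 and x₁ + x₂ − 2x₃ + x₄ + x₅ − 2x₆ = 0}, is admissible, and lies on an extremal ray of C: whenever vᵢ = y + z with y, z ∈ C, both y and z are nonnegative scalar multiples of vᵢ. (These are the four admissible extremal rays of Q(𝒯) for the figure-eight knot complement listed in the paper's table; each corresponds to a once-punctured Klein bottle.) -/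
/-- A nonzero vector `v` of the cone lies on an extremal ray: whenever `v = y + z`
with `y, z` in the cone, both `y` and `z` are nonnegative multiples of `v`. -/
def OnExtremalRay (v : Fin 6 → ℝ) : Prop :=
  v ≠ 0 ∧ ∀ y z : Fin 6 → ℝ, y ∈ QCone → z ∈ QCone → v = y + z →
    (∃ a : ℝ, 0 ≤ a ∧ y = a • v) ∧ (∃ b : ℝ, 0 ≤ b ∧ z = b • v)

/-- Auxiliary: pointwise description of a scalar multiple on `Fin 6`. -/
private lemma eq_smul_of_components {y v : Fin 6 → ℝ} {a : ℝ}
    (h0 : y 0 = a * v 0) (h1 : y 1 = a * v 1) (h2 : y 2 = a * v 2)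
    (h3 : y 3 = a * v 3) (h4 : y 4 = a * v 4) (h5 : y 5 = a * v 5) :
    y = a • v := by
  funext i; fin_cases i
  exacts [h0, h1, h2, h3, h4, h5]

theorem four_admissible_extremal_rays :
    ∀ v ∈ ({![2, 0, 0, 0, 0, 1], ![0, 2, 0, 0, 0, 1],
            ![0, 0, 1, 2, 0, 0], ![0, 0, 1, 0, 2, 0]} : Set (Fin 6 → ℝ)),
      v ∈ QCone ∧ Admissible v ∧ OnExtremalRay v := by
  intro v hv
  simp only [Set.mem_insert_iff, Set.mem_singleton_iff] at hv
  rcases hv with rfl | rfl | rfl | rfl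
  · -- v = (2,0,0,0,0,1)
    refine ⟨⟨fun i => by fin_cases i <;> norm_num,
      show (2:ℝ) + 0 - 2 * 0 + 0 + 0 - 2 * 1 = 0 by norm_num⟩,
      ⟨Or.inl ⟨rfl, rfl⟩, Or.inr (Or.inr ⟨rfl, rfl⟩)⟩, ?_, ?_⟩
    · intro h; have := congrFun h 0
      rw [show ((0 : Fin 6 → ℝ) 0) = 0 from rfl] at this; norm_num at this
    · intro y z ⟨hy1, hy2⟩ ⟨hz1, hz2⟩ heq
      have e0 : y 0 + z 0 = 2 := (congrFun heq 0).symm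
      have e1 : y 1 + z 1 = 0 := (congrFun heq 1).symm
      have e2 : y 2 + z 2 = 0 := (congrFun heq 2).symm
      have e3 : y 3 + z 3 = 0 := (congrFun heq 3).symm
      have e4 : y 4 + z 4 = 0 := (congrFun heq 4).symm
      have e5 : y 5 + z 5 = 1 := (congrFun heq 5).symm
      have y1 : y 1 = 0 := by have := hy1 1; have := hz1 1; linarith
      have y2 : y 2 = 0 := by have := hy1 2; have := hz1 2; linarith
      have y3 : y 3 = 0 := by have := hy1 3; have := hz1 3; linarith
      have y4 : y 4 = 0 := by have := hy1 4; have := hz1 4; linarith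
      have z1 : z 1 = 0 := by linarith
      have z2 : z 2 = 0 := by linarith
      have z3 : z 3 = 0 := by linarith
      have z4 : z 4 = 0 := by linarith
      exact ⟨⟨y 5, hy1 5, eq_smul_of_components
          (show y 0 = y 5 * 2 by linarith) (show y 1 = y 5 * 0 by linarith)
          (show y 2 = y 5 * 0 by linarith) (show y 3 = y 5 * 0 by linarith)
          (show y 4 = y 5 * 0 by linarith) (show y 5 = y 5 * 1 by ring)⟩,
        ⟨z 5, hz1 5, eq_smul_of_components
          (show z 0 = z 5 * 2 by linarith) (show z 1 = z 5 * 0 by linarith)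
          (show z 2 = z 5 * 0 by linarith) (show z 3 = z 5 * 0 by linarith)
          (show z 4 = z 5 * 0 by linarith) (show z 5 = z 5 * 1 by ring)⟩⟩
  · -- v = (0,2,0,0,0,1)
    refine ⟨⟨fun i => by fin_cases i <;> norm_num,
      show (0:ℝ) + 2 - 2 * 0 + 0 + 0 - 2 * 1 = 0 by norm_num⟩,
      ⟨Or.inr (Or.inl ⟨rfl, rfl⟩), Or.inr (Or.inr ⟨rfl, rfl⟩)⟩, ?_, ?_⟩
    · intro h; have := congrFun h 1
      rw [show ((0 : Fin 6 → ℝ) 1) = 0 from rfl] at this; norm_num at this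
    · intro y z ⟨hy1, hy2⟩ ⟨hz1, hz2⟩ heq
      have e0 : y 0 + z 0 = 0 := (congrFun heq 0).symm
      have e1 : y 1 + z 1 = 2 := (congrFun heq 1).symm
      have e2 : y 2 + z 2 = 0 := (congrFun heq 2).symm
      have e3 : y 3 + z 3 = 0 := (congrFun heq 3).symm
      have e4 : y 4 + z 4 = 0 := (congrFun heq 4).symm
      have e5 : y 5 + z 5 = 1 := (congrFun heq 5).symm
      have y0 : y 0 = 0 := by have := hy1 0; have := hz1 0; linarith
      have y2 : y 2 = 0 := by have := hy1 2; have := hz1 2; linarith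
      have y3 : y 3 = 0 := by have := hy1 3; have := hz1 3; linarith
      have y4 : y 4 = 0 := by have := hy1 4; have := hz1 4; linarith
      have z0 : z 0 = 0 := by linarith
      have z2 : z 2 = 0 := by linarith
      have z3 : z 3 = 0 := by linarith
      have z4 : z 4 = 0 := by linarith
      exact ⟨⟨y 5, hy1 5, eq_smul_of_components
          (show y 0 = y 5 * 0 by linarith) (show y 1 = y 5 * 2 by linarith)
          (show y 2 = y 5 * 0 by linarith) (show y 3 = y 5 * 0 by linarith)
          (show y 4 = y 5 * 0 by linarith) (show y 5 = y 5 * 1 by ring)⟩,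
        ⟨z 5, hz1 5, eq_smul_of_components
          (show z 0 = z 5 * 0 by linarith) (show z 1 = z 5 * 2 by linarith)
          (show z 2 = z 5 * 0 by linarith) (show z 3 = z 5 * 0 by linarith)
          (show z 4 = z 5 * 0 by linarith) (show z 5 = z 5 * 1 by ring)⟩⟩
  · -- v = (0,0,1,2,0,0)
    refine ⟨⟨fun i => by fin_cases i <;> norm_num,
      show (0:ℝ) + 0 - 2 * 1 + 2 + 0 - 2 * 0 = 0 by norm_num⟩,
      ⟨Or.inr (Or.inr ⟨rfl, rfl⟩), Or.inl ⟨rfl, rfl⟩⟩, ?_, ?_⟩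
    · intro h; have := congrFun h 2
      rw [show ((0 : Fin 6 → ℝ) 2) = 0 from rfl] at this; change (1:ℝ) = 0 at this; norm_num at this
    · intro y z ⟨hy1, hy2⟩ ⟨hz1, hz2⟩ heq
      have e0 : y 0 + z 0 = 0 := (congrFun heq 0).symm
      have e1 : y 1 + z 1 = 0 := (congrFun heq 1).symm
      have e2 : y 2 + z 2 = 1 := (congrFun heq 2).symm
      have e3 : y 3 + z 3 = 2 := (congrFun heq 3).symm
      have e4 : y 4 + z 4 = 0 := (congrFun heq 4).symm
      have e5 : y 5 + z 5 = 0 := (congrFun heq 5).symm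
      have y0 : y 0 = 0 := by have := hy1 0; have := hz1 0; linarith
      have y1 : y 1 = 0 := by have := hy1 1; have := hz1 1; linarith
      have y4 : y 4 = 0 := by have := hy1 4; have := hz1 4; linarith
      have y5 : y 5 = 0 := by have := hy1 5; have := hz1 5; linarith
      have z0 : z 0 = 0 := by linarith
      have z1 : z 1 = 0 := by linarith
      have z4 : z 4 = 0 := by linarith
      have z5 : z 5 = 0 := by linarith
      exact ⟨⟨y 2, hy1 2, eq_smul_of_components
          (show y 0 = y 2 * 0 by linarith) (show y 1 = y 2 * 0 by linarith)
          (show y 2 = y 2 * 1 by ring) (show y 3 = y 2 * 2 by linarith)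
          (show y 4 = y 2 * 0 by linarith) (show y 5 = y 2 * 0 by linarith)⟩,
        ⟨z 2, hz1 2, eq_smul_of_components
          (show z 0 = z 2 * 0 by linarith) (show z 1 = z 2 * 0 by linarith)
          (show z 2 = z 2 * 1 by ring) (show z 3 = z 2 * 2 by linarith)
          (show z 4 = z 2 * 0 by linarith) (show z 5 = z 2 * 0 by linarith)⟩⟩
  · -- v = (0,0,1,0,2,0)
    refine ⟨⟨fun i => by fin_cases i <;> norm_num,
      show (0:ℝ) + 0 - 2 * 1 + 0 + 2 - 2 * 0 = 0 by norm_num⟩,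
      ⟨Or.inr (Or.inr ⟨rfl, rfl⟩), Or.inr (Or.inl ⟨rfl, rfl⟩)⟩, ?_, ?_⟩
    · intro h; have := congrFun h 2
      rw [show ((0 : Fin 6 → ℝ) 2) = 0 from rfl] at this; change (1:ℝ) = 0 at this; norm_num at this
    · intro y z ⟨hy1, hy2⟩ ⟨hz1, hz2⟩ heq
      have e0 : y 0 + z 0 = 0 := (congrFun heq 0).symm
      have e1 : y 1 + z 1 = 0 := (congrFun heq 1).symm
      have e2 : y 2 + z 2 = 1 := (congrFun heq 2).symm
      have e3 : y 3 + z 3 = 0 := (congrFun heq 3).symm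
      have e4 : y 4 + z 4 = 2 := (congrFun heq 4).symm
      have e5 : y 5 + z 5 = 0 := (congrFun heq 5).symm
      have y0 : y 0 = 0 := by have := hy1 0; have := hz1 0; linarith
      have y1 : y 1 = 0 := by have := hy1 1; have := hz1 1; linarith
      have y3 : y 3 = 0 := by have := hy1 3; have := hz1 3; linarith
      have y5 : y 5 = 0 := by have := hy1 5; have := hz1 5; linarith
      have z0 : z 0 = 0 := by linarith
      have z1 : z 1 = 0 := by linarith
      have z3 : z 3 = 0 := by linarith
      have z5 : z 5 = 0 := by linarith
      exact ⟨⟨y 2, hy1 2, eq_smul_of_components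
          (show y 0 = y 2 * 0 by linarith) (show y 1 = y 2 * 0 by linarith)
          (show y 2 = y 2 * 1 by ring) (show y 3 = y 2 * 0 by linarith)
          (show y 4 = y 2 * 2 by linarith) (show y 5 = y 2 * 0 by linarith)⟩,
        ⟨z 2, hz1 2, eq_smul_of_components
          (show z 0 = z 2 * 0 by linarith) (show z 1 = z 2 * 0 by linarith)
          (show z 2 = z 2 * 1 by ring) (show z 3 = z 2 * 0 by linarith)
          (show z 4 = z 2 * 2 by linarith) (show z 5 = z 2 * 0 by linarith)⟩⟩
end

section
/- Every nonzero admissible vector x in C = {x ∈ ℝ⁶ : x ≥ 0 and x₁ + x₂ − 2x₃ + x₄ + x₅ − 2x₆ = 0} is a positive scalar multiple of one of the four vectors v₁ = (2,0,0,0,0,1), v₂ = (0,2,0,0,0,1), v₃ = (0,0,1,2,0,0), v₄ = (0,0,1,0,2,0). (This is the paper's direct calculation that the cone Q(𝒯) for the figure-eight knot complement has exactly four admissible extremal rays.) -/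
theorem admissible_part_is_four_rays (x : Fin 6 → ℝ) (hx : x ∈ QCone)
    (hadm : Admissible x) (hne : x ≠ 0) :
    ∃ c : ℝ, 0 < c ∧
      ∃ v ∈ ({![2, 0, 0, 0, 0, 1], ![0, 2, 0, 0, 0, 1],
              ![0, 0, 1, 2, 0, 0], ![0, 0, 1, 0, 2, 0]} : Set (Fin 6 → ℝ)),
        x = c • v := by
  obtain ⟨hpos, heq⟩ := hx
  obtain ⟨hL, hR⟩ := hadm
  have h0 := hpos 0; have h1 := hpos 1; have h2 := hpos 2
  have h3 := hpos 3; have h4 := hpos 4; have h5 := hpos 5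
  have hz : ¬ (x 0 = 0 ∧ x 1 = 0 ∧ x 2 = 0 ∧ x 3 = 0 ∧ x 4 = 0 ∧ x 5 = 0) := by
    rintro ⟨a0, a1, a2, a3, a4, a5⟩
    apply hne
    funext i
    fin_cases i <;> simpa
  rcases hL with ⟨e1, e2⟩ | ⟨e0, e2⟩ | ⟨e0, e1⟩ <;>
    rcases hR with ⟨e4, e5⟩ | ⟨e3, e5⟩ | ⟨e3, e4⟩
  · exact absurd ⟨by linarith, e1, e2, by linarith, e4, e5⟩ hz
  · exact absurd ⟨by linarith, e1, e2, e3, by linarith, e5⟩ hz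
  · rcases eq_or_lt_of_le h5 with h | h
    · exact absurd ⟨by linarith, e1, e2, e3, e4, h.symm⟩ hz
    · refine ⟨x 5, h, ![2, 0, 0, 0, 0, 1], by simp, funext fun i => ?_⟩
      fin_cases i
      · show x 0 = x 5 * 2; linarith
      · show x 1 = x 5 * 0; linarith
      · show x 2 = x 5 * 0; linarith
      · show x 3 = x 5 * 0; linarith
      · show x 4 = x 5 * 0; linarith
      · show x 5 = x 5 * 1; linarith
  · exact absurd ⟨e0, by linarith, e2, by linarith, e4, e5⟩ hz
  · exact absurd ⟨e0, by linarith, e2, e3, by linarith, e5⟩ hz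
  · rcases eq_or_lt_of_le h5 with h | h
    · exact absurd ⟨e0, by linarith, e2, e3, e4, h.symm⟩ hz
    · refine ⟨x 5, h, ![0, 2, 0, 0, 0, 1], by simp, funext fun i => ?_⟩
      fin_cases i
      · show x 0 = x 5 * 0; linarith
      · show x 1 = x 5 * 2; linarith
      · show x 2 = x 5 * 0; linarith
      · show x 3 = x 5 * 0; linarith
      · show x 4 = x 5 * 0; linarith
      · show x 5 = x 5 * 1; linarith
  · rcases eq_or_lt_of_le h2 with h | h
    · exact absurd ⟨e0, e1, h.symm, by linarith, e4, e5⟩ hz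
    · refine ⟨x 2, h, ![0, 0, 1, 2, 0, 0], by simp, funext fun i => ?_⟩
      fin_cases i
      · show x 0 = x 2 * 0; linarith
      · show x 1 = x 2 * 0; linarith
      · show x 2 = x 2 * 1; linarith
      · show x 3 = x 2 * 2; linarith
      · show x 4 = x 2 * 0; linarith
      · show x 5 = x 2 * 0; linarith
  · rcases eq_or_lt_of_le h2 with h | h
    · exact absurd ⟨e0, e1, h.symm, e3, by linarith, e5⟩ hz
    · refine ⟨x 2, h, ![0, 0, 1, 0, 2, 0], by simp, funext fun i => ?_⟩
      fin_cases i
      · show x 0 = x 2 * 0; linarith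
      · show x 1 = x 2 * 0; linarith
      · show x 2 = x 2 * 1; linarith
      · show x 3 = x 2 * 0; linarith
      · show x 4 = x 2 * 2; linarith
      · show x 5 = x 2 * 0; linarith
  · exact absurd ⟨e0, e1, by linarith, e3, e4, by linarith⟩ hz
end

section
/- For every nonzero admissible vector x in C = {x ∈ ℝ⁶ : x ≥ 0 and x₁ + x₂ − 2x₃ + x₄ + x₅ − 2x₆ = 0}, both ν(μ)(x) ≠ 0 and ν(λ)(x) ≠ 0. (This is the linear-algebraic content of the paper's observation that no spun-normal surface in Thurston's triangulation of the figure-eight knot complement is a Seifert surface for the knot: every nonzero admissible solution has boundary functional nonvanishing on both the meridian and the longitude.) -/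
lemma all_zero_eq (x : Fin 6 → ℝ) (h0 : x 0 = 0) (h1 : x 1 = 0) (h2 : x 2 = 0)
    (h3 : x 3 = 0) (h4 : x 4 = 0) (h5 : x 5 = 0) : x = 0 := by
  funext i
  fin_cases i <;> simpa

theorem no_spun_normal_seifert_surface (x : Fin 6 → ℝ) (hx : x ∈ QCone)
    (hadm : Admissible x) (hne : x ≠ 0) :
    nuMu x ≠ 0 ∧ nuLambda x ≠ 0 := by
  obtain ⟨hpos, heq⟩ := hx
  obtain ⟨h1 | h1 | h1, h2 | h2 | h2⟩ := hadm <;>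
    obtain ⟨ha, hb⟩ := h1 <;> obtain ⟨hc, hd⟩ := h2 <;>
    simp only [nuMu, nuLambda]
  · exact absurd (all_zero_eq x (by linarith [hpos 0, hpos 3]) ha hb
      (by linarith [hpos 0, hpos 3]) hc hd) hne
  · exact absurd (all_zero_eq x (by linarith [hpos 0, hpos 4]) ha hb hc
      (by linarith [hpos 0, hpos 4]) hd) hne
  · rcases eq_or_lt_of_le (hpos 5) with h5 | h5
    · exact absurd (all_zero_eq x (by linarith) ha hb hc hd h5.symm) hne
    · constructor <;> intro h <;> nlinarith
  · exact absurd (all_zero_eq x ha (by linarith [hpos 1, hpos 3]) hb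
      (by linarith [hpos 1, hpos 3]) hc hd) hne
  · exact absurd (all_zero_eq x ha (by linarith [hpos 1, hpos 4]) hb hc
      (by linarith [hpos 1, hpos 4]) hd) hne
  · rcases eq_or_lt_of_le (hpos 5) with h5 | h5
    · exact absurd (all_zero_eq x ha (by linarith) hb hc hd h5.symm) hne
    · constructor <;> intro h <;> nlinarith
  · rcases eq_or_lt_of_le (hpos 2) with h2' | h2'
    · exact absurd (all_zero_eq x ha hb (by linarith) (by linarith) hc hd) hne
    · constructor <;> intro h <;> nlinarith
  · rcases eq_or_lt_of_le (hpos 2) with h2' | h2'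
    · exact absurd (all_zero_eq x ha hb (by linarith) hc (by linarith) hd) hne
    · constructor <;> intro h <;> nlinarith
  · exact absurd (all_zero_eq x ha hb (by linarith [hpos 2, hpos 5]) hc hd
      (by linarith [hpos 2, hpos 5])) hne
end
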